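/- Let K : [0,∞) → [0,1] be a cumulative distribution function with K(0) = 0, strictly increasing and differentiable on the open interval where 0 < K < 1, with K(T) = 1 for some finite T, and such that C(u,v) = u·v·(1 + K̄⁻¹(max(u,v))) is a copula, where K̄⁻¹(x) = inf{t ≥ 0 : K(t) ≥ 1 − x}. Then Spearman's Rho of C satisfies ρ = 12·∫₀¹∫₀¹ C(u,v) du dv − 3 = 3·∫₀^∞ (1 − K(t))⁴ dt. -/

import Mathlib

open MeasureTheory Set Function

/-- A bivariate copula on `[0,1]²`, given as a function `ℝ → ℝ → ℝ`. -/
def IsCopula (C : ℝ → ℝ → ℝ) : Prop :=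
  (∀ u ∈ Set.Icc (0:ℝ) 1, C u 0 = 0 ∧ C 0 u = 0) ∧
  (∀ u ∈ Set.Icc (0:ℝ) 1, C u 1 = u ∧ C 1 u = u) ∧
  (∀ u₁ u₂ v₁ v₂ : ℝ, 0 ≤ u₁ → u₁ ≤ u₂ → u₂ ≤ 1 → 0 ≤ v₁ → v₁ ≤ v₂ → v₂ ≤ 1 →
    C u₂ v₂ - C u₂ v₁ - C u₁ v₂ + C u₁ v₁ ≥ 0)

/-- Generalized inverse of the survival function `K̄ = 1 - K` of a cdf `K` on `[0,∞)`:
`K̄⁻¹(x) = inf {t ≥ 0 : K(t) ≥ 1 - x}`. -/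
noncomputable def survInv (K : ℝ → ℝ) (x : ℝ) : ℝ :=
  sInf {t : ℝ | 0 ≤ t ∧ 1 - x ≤ K t}

theorem stmt13 (K : ℝ → ℝ)
    (hK0 : K 0 = 0)
    (hKrange : ∀ t : ℝ, 0 ≤ t → K t ∈ Set.Icc (0:ℝ) 1)
    (hKmono : MonotoneOn K (Set.Ici 0))
    (hKstrict : StrictMonoOn K {t : ℝ | 0 ≤ t ∧ 0 < K t ∧ K t < 1})
    (hKdiff : ∀ t : ℝ, 0 ≤ t → 0 < K t → K t < 1 → DifferentiableAt ℝ K t)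
    (hT : ∃ T : ℝ, 0 ≤ T ∧ K T = 1)
    (hC : IsCopula (fun u v => u * v * (1 + survInv K (max u v)))) :
    12 * (∫ u in (0:ℝ)..1, ∫ v in (0:ℝ)..1,
        u * v * (1 + survInv K (max u v))) - 3 =
      3 * ∫ t in Set.Ioi (0:ℝ), (1 - K t) ^ 4 := by
  classical
  obtain ⟨T, hT0, hT1⟩ := hT
  -- an everywhere-monotone extension of K
  set K' : ℝ → ℝ := fun t => K (max t 0) with hK'def
  have hK'mono : Monotone K' := fun a b hab =>
    hKmono (le_max_right a 0) (le_max_right b 0) (max_le_max hab le_rfl)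
  have hK'meas : Measurable K' := hK'mono.measurable
  have hK'range : ∀ t, K' t ∈ Set.Icc (0:ℝ) 1 := fun t => hKrange _ (le_max_right t 0)
  have hK'eq : ∀ t : ℝ, 0 < t → K' t = K t := fun t ht => by
    simp only [hK'def, max_eq_left ht.le]
  have hK'one : ∀ t : ℝ, T ≤ t → K' t = 1 := by
    intro t ht
    refine le_antisymm (hK'range t).2 ?_
    rw [← hT1]
    exact hKmono hT0 (le_max_right t 0) (ht.trans (le_max_left t 0))
  clear_value K'
  -- the survival function of K'
  set c : ℝ → ℝ := fun t => 1 - K' t with hcdef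
  have hcmeas : Measurable c := measurable_const.sub hK'meas
  have hc0 : ∀ t, 0 ≤ c t := fun t => by
    have := (hK'range t).2; simp only [hcdef]; linarith
  have hc1 : ∀ t, c t ≤ 1 := fun t => by
    have := (hK'range t).1; simp only [hcdef]; linarith
  have hcT : ∀ t, T ≤ t → c t = 0 := fun t ht => by
    simp only [hcdef, hK'one t ht, sub_self]
  have hcpos : ∀ t, 0 < c t → t ∈ Iic T := by
    intro t h
    by_contra hc'
    rw [hcT t (le_of_not_ge (by simpa using hc'))] at h
    exact lt_irrefl 0 h
  clear_value c
  -- basic facts about g := survInv K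
  set g : ℝ → ℝ := survInv K with hgdef
  have hg0 : ∀ x, 0 ≤ g x := fun x => Real.sInf_nonneg (fun t ht => ht.1)
  have hTmem : ∀ x : ℝ, 0 ≤ x → T ∈ {t : ℝ | 0 ≤ t ∧ 1 - x ≤ K t} :=
    fun x hx => ⟨hT0, by rw [hT1]; linarith⟩
  have hbdd : ∀ x : ℝ, BddBelow {t : ℝ | 0 ≤ t ∧ 1 - x ≤ K t} :=
    fun x => ⟨0, fun t ht => ht.1⟩
  have hgT : ∀ x, 0 ≤ x → g x ≤ T := fun x hx => csInf_le (hbdd x) (hTmem x hx)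
  have hganti : ∀ x y : ℝ, 0 ≤ x → x ≤ y → g y ≤ g x := by
    intro x y hx hxy
    exact csInf_le_csInf (hbdd y) ⟨T, hTmem x hx⟩
      (fun t ht => ⟨ht.1, le_trans (by linarith) ht.2⟩)
  have hgextanti : Antitone (fun y : ℝ => g (max y 0)) := fun a b hab =>
    hganti _ _ (le_max_right a 0) (max_le_max hab le_rfl)
  have hgextmeas : Measurable (fun y : ℝ => g (max y 0)) := hgextanti.measurable
  clear_value g
  -- the key measure computation
  have key : ∀ x : ℝ, 0 < x →
      volume ({t | x < c t} ∩ Ioi 0) = ENNReal.ofReal (g x) := by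
    intro x hx
    have hgx : g x = sInf {t : ℝ | 0 ≤ t ∧ 1 - x ≤ K t} := by rw [hgdef]; rfl
    have h1 : Ioo 0 (g x) ⊆ {t | x < c t} ∩ Ioi 0 := by
      rintro t ⟨ht0, htg⟩
      refine ⟨?_, ht0⟩
      by_contra hcon
      have hcon' : c t ≤ x := not_lt.mp hcon
      have h1x : 1 - x ≤ K t := by
        have hce : c t = 1 - K t := by
          simp only [hcdef]; rw [hK'eq t ht0]
        rw [hce] at hcon'
        linarith
      rw [hgx] at htg
      exact absurd (csInf_le (hbdd x) ⟨ht0.le, h1x⟩) (not_le.mpr htg)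
    have h2 : {t | x < c t} ∩ Ioi 0 ⊆ Ioc 0 (g x) := by
      rintro t ⟨htc, ht0⟩
      have ht0' : (0:ℝ) < t := ht0
      refine ⟨ht0', ?_⟩
      rw [hgx]
      refine le_csInf ⟨T, hTmem x hx.le⟩ (fun s hs => ?_)
      by_contra hst
      push_neg at hst
      have hKst : K s ≤ K t := hKmono hs.1 ht0'.le hst.le
      have hxc : x < 1 - K t := by
        have hce : c t = 1 - K t := by
          simp only [hcdef]; rw [hK'eq t ht0']
        have htc' : x < c t := htc
        rw [hce] at htc'
        exact htc'
      linarith [hs.2]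
    refine le_antisymm ?_ ?_
    · calc volume ({t | x < c t} ∩ Ioi 0) ≤ volume (Ioc 0 (g x)) := measure_mono h2
        _ = ENNReal.ofReal (g x) := by rw [Real.volume_Ioc, sub_zero]
    · calc ENNReal.ofReal (g x) = volume (Ioo 0 (g x)) := by rw [Real.volume_Ioo, sub_zero]
        _ ≤ volume ({t | x < c t} ∩ Ioi 0) := measure_mono h1
  -- g as an integral of an indicator
  have hLg : ∀ x : ℝ, 0 < x →
      (∫ t in Ioi (0:ℝ), (if x < c t then (1:ℝ) else 0)) = g x := by
    intro x hx
    have hms : MeasurableSet {t : ℝ | x < c t} := measurableSet_lt measurable_const hcmeas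
    have hind : (fun t => if x < c t then (1:ℝ) else 0)
        = Set.indicator {t | x < c t} (fun _ => (1:ℝ)) := by
      funext t; simp [Set.indicator_apply, mem_setOf_eq]
    rw [hind, integral_indicator hms, Measure.restrict_restrict hms]
    simp [measureReal_def, key x hx, ENNReal.toReal_ofReal (hg0 x)]
  -- an auxiliary integral
  have hIooInt : ∀ r : ℝ, 0 ≤ r → (∫ v in Ioo (0:ℝ) r, v) = r ^ 2 / 2 := by
    intro r hr
    rw [← integral_Ioc_eq_integral_Ioo, ← intervalIntegral.integral_of_le hr,
      integral_id]
    ring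
  -- an integrable dominating function on the product space
  set μ : Measure ℝ := volume.restrict (Ioc (0:ℝ) 1) with hμdef
  set ν : Measure ℝ := volume.restrict (Ioi (0:ℝ)) with hνdef
  have hνIicT : ν (Iic T) < ⊤ := by
    rw [hνdef, Measure.restrict_apply measurableSet_Iic, Set.Iic_inter_Ioi,
      Real.volume_Ioc]
    exact ENNReal.ofReal_lt_top
  have hBint : Integrable (Set.indicator ((univ : Set ℝ) ×ˢ Iic T) (fun _ => (1:ℝ)))
      (μ.prod ν) := by
    rw [integrable_indicator_iff (MeasurableSet.univ.prod measurableSet_Iic)]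
    refine (integrableOn_const_iff).mpr (Or.inr ?_)
    rw [Measure.prod_prod]
    have hμuniv : μ univ ≤ 1 := by
      rw [hμdef, Measure.restrict_apply_univ, Real.volume_Ioc]
      simp [ENNReal.ofReal_le_one]
    calc μ univ * ν (Iic T) ≤ 1 * ν (Iic T) := mul_le_mul_left hμuniv _
      _ < ⊤ := by simpa using hνIicT
  have hB1int : Integrable (Set.indicator (Iic T) (fun _ => (1:ℝ))) ν := by
    rw [integrable_indicator_iff measurableSet_Iic]
    exact (integrableOn_const_iff).mpr (Or.inr hνIicT)
  -- the kernel G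
  set G : ℝ → ℝ → ℝ := fun u t => if u < c t then (c t) ^ 2 / 2 else 0 with hGdef
  have hGmeas : Measurable (uncurry G) := by
    apply Measurable.ite
    · exact measurableSet_lt measurable_fst (hcmeas.comp measurable_snd)
    · exact ((hcmeas.comp measurable_snd).pow_const 2).div_const 2
    · exact measurable_const
  clear_value G
  have hGbound : ∀ u t : ℝ, ‖G u t‖ ≤ Set.indicator (Iic T) (fun _ => (1:ℝ)) t := by
    intro u t
    by_cases ht : t ≤ T
    · rw [Set.indicator_of_mem (mem_Iic.mpr ht)]
      simp only [hGdef]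
      by_cases h : u < c t
      · rw [if_pos h, Real.norm_eq_abs, abs_of_nonneg (by positivity)]
        have hm : c t * c t ≤ 1 := mul_le_one₀ (hc1 t) (hc0 t) (hc1 t)
        have hp : c t ^ 2 = c t * c t := pow_two (c t)
        show c t ^ 2 / 2 ≤ 1
        linarith
      · rw [if_neg h]; simp
    · rw [Set.indicator_of_notMem (by simpa using ht)]
      have : c t = 0 := hcT t (le_of_not_ge ht)
      simp only [hGdef]
      simp [this]
  have hGint : Integrable (uncurry G) (μ.prod ν) := by
    refine Integrable.mono' hBint hGmeas.aestronglyMeasurable (ae_of_all _ ?_)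
    rintro ⟨u, t⟩
    calc ‖uncurry G (u, t)‖ ≤ Set.indicator (Iic T) (fun _ => (1:ℝ)) t := hGbound u t
      _ ≤ Set.indicator ((univ : Set ℝ) ×ˢ Iic T) (fun _ => (1:ℝ)) (u, t) := by
          by_cases ht : t ≤ T
          · rw [Set.indicator_of_mem (mem_Iic.mpr ht), Set.indicator_of_mem (Set.mem_prod.mpr ⟨Set.mem_univ _, mem_Iic.mpr ht⟩)]
          · rw [Set.indicator_of_notMem (by simpa using ht)]
            exact Set.indicator_nonneg (fun _ _ => zero_le_one) _
  have hGuint : ∀ u : ℝ, Integrable (G u) ν := by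
    intro u
    refine Integrable.mono' hB1int ?_ (ae_of_all _ (hGbound u))
    exact (hGmeas.comp (measurable_const.prodMk measurable_id)).aestronglyMeasurable
  -- Φ, the inner t-integral
  set Φ : ℝ → ℝ := fun u => ∫ t in Ioi (0:ℝ), G u t with hΦdef
  have hΦint : Integrable Φ μ := by
    have h := Integrable.integral_prod_left (f := uncurry G) hGint
    exact h
  clear_value Φ
  have hΦbound : ∀ u, |Φ u| ≤ T := by
    intro u
    have h1 : |Φ u| ≤ ∫ t in Ioi (0:ℝ), ‖G u t‖ := by
      simp only [hΦdef]
      rw [← Real.norm_eq_abs]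
      exact norm_integral_le_integral_norm _
    have h2 : (∫ t in Ioi (0:ℝ), ‖G u t‖)
        ≤ ∫ t in Ioi (0:ℝ), Set.indicator (Iic T) (fun _ => (1:ℝ)) t :=
      integral_mono (hGuint u).norm hB1int (fun t => hGbound u t)
    have h3 : (∫ t in Ioi (0:ℝ), Set.indicator (Iic T) (fun _ => (1:ℝ)) t) = T := by
      rw [integral_indicator measurableSet_Iic, Measure.restrict_restrict measurableSet_Iic]
      rw [Set.Iic_inter_Ioi]
      simp [Real.volume_Ioc, ENNReal.toReal_ofReal hT0, hT0]
    linarith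
  -- Step 1: the inner integral over v
  have step1 : ∀ u ∈ Ioc (0:ℝ) 1,
      (∫ v in (0:ℝ)..1, u * v * (1 + g (max u v))) = u / 2 + u * Φ u := by
    intro u hu
    -- the two-variable kernel for the v-integral
    set F : ℝ → ℝ → ℝ := fun v t => if max u v < c t then max (min v 1) 0 else 0 with hFdef
    have hFmeas : Measurable (uncurry F) := by
      apply Measurable.ite
      · exact measurableSet_lt (measurable_const.max measurable_fst)
          (hcmeas.comp measurable_snd)
      · exact (measurable_fst.min measurable_const).max measurable_const
      · exact measurable_const
    clear_value F
    have hFint : Integrable (uncurry F) (μ.prod ν) := by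
      refine Integrable.mono' hBint hFmeas.aestronglyMeasurable (ae_of_all _ ?_)
      rintro ⟨v, t⟩
      by_cases h : max u v < c t
      · have hct : 0 < c t := lt_of_le_of_lt (le_trans hu.1.le (le_max_left u v)) h
        have htT : t ∈ Iic T := hcpos t hct
        rw [Set.indicator_of_mem (Set.mem_prod.mpr ⟨Set.mem_univ _, htT⟩)]
        simp only [uncurry, hFdef, if_pos h]
        rw [Real.norm_eq_abs, abs_of_nonneg (le_max_right _ _)]
        exact max_le (min_le_right v 1) zero_le_one
      · simp only [uncurry, hFdef, if_neg h, norm_zero]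
        exact Set.indicator_nonneg (fun _ _ => zero_le_one) _
    -- pointwise identity: the v-integrand via the t-integral
    have hcore : (∫ v in Ioc (0:ℝ) 1, v * g (max u v)) = Φ u := by
      have e1 : (∫ v in Ioc (0:ℝ) 1, v * g (max u v))
          = ∫ v in Ioc (0:ℝ) 1, ∫ t in Ioi (0:ℝ), F v t := by
        refine setIntegral_congr_fun measurableSet_Ioc (fun v hv => ?_)
        have hmax : 0 < max u v := lt_of_lt_of_le hu.1 (le_max_left u v)
        have : v * g (max u v)
            = v * ∫ t in Ioi (0:ℝ), (if max u v < c t then (1:ℝ) else 0) := by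
          rw [hLg _ hmax]
        rw [this, ← integral_const_mul]
        refine setIntegral_congr_fun measurableSet_Ioi (fun t _ => ?_)
        simp only [hFdef, mul_ite, mul_one, mul_zero]
        rcases lt_or_ge (max u v) (c t) with h | h
        · rw [if_pos h, if_pos h, min_eq_left hv.2, max_eq_left hv.1.le]
        · rw [if_neg (not_lt.mpr h), if_neg (not_lt.mpr h)]
      rw [e1, integral_integral_swap hFint]
      simp only [hΦdef]
      refine setIntegral_congr_fun measurableSet_Ioi (fun t _ => ?_)
      by_cases hcu : u < c t
      · have e2 : ∀ v ∈ Ioc (0:ℝ) 1, F v t = if v < c t then v else 0 := by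
          intro v hv
          simp only [hFdef, max_lt_iff, min_eq_left hv.2, max_eq_left hv.1.le]
          by_cases h : v < c t
          · rw [if_pos ⟨hcu, h⟩, if_pos h]
          · rw [if_neg (fun hh => h hh.2), if_neg h]
        rw [setIntegral_congr_fun measurableSet_Ioc e2]
        have hindv : (fun v : ℝ => if v < c t then v else 0)
            = Set.indicator (Iio (c t)) (fun v => v) := by
          funext v; simp [Set.indicator_apply, mem_Iio]
        rw [hindv, integral_indicator measurableSet_Iio,
          Measure.restrict_restrict measurableSet_Iio]
        have hset : Iio (c t) ∩ Ioc (0:ℝ) 1 = Ioo 0 (c t) := by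
          ext v
          simp only [mem_inter_iff, mem_Iio, mem_Ioc, mem_Ioo]
          constructor
          · rintro ⟨h1, h2, h3⟩; exact ⟨h2, h1⟩
          · rintro ⟨h1, h2⟩; exact ⟨h2, h1, le_trans h2.le (hc1 t)⟩
        rw [hset, hIooInt (c t) (hc0 t)]
        simp only [hGdef]
        rw [if_pos hcu]
      · have e2 : ∀ v ∈ Ioc (0:ℝ) 1, F v t = 0 := by
          intro v hv
          simp only [hFdef, max_lt_iff]
          rw [if_neg (fun hh => hcu hh.1)]
        rw [setIntegral_congr_fun measurableSet_Ioc e2, integral_zero]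
        simp only [hGdef]
        rw [if_neg hcu]
    -- assemble
    rw [intervalIntegral.integral_of_le zero_le_one]
    have hsplit : ∀ v ∈ Ioc (0:ℝ) 1,
        u * v * (1 + g (max u v)) = u * v + u * (v * g (max u v)) := by
      intro v hv; ring
    rw [setIntegral_congr_fun measurableSet_Ioc hsplit]
    have hmeasv : Measurable (fun v => v * g (max u v)) := by
      have hco : (fun v : ℝ => g (max u v)) = (fun y : ℝ => g (max y 0)) ∘ (fun v => max u v) := by
        funext v
        simp only [comp_apply]
        rw [max_eq_left (le_trans hu.1.le (le_max_left u v))]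
      exact measurable_id.mul (by rw [hco]; exact hgextmeas.comp (measurable_const.max measurable_id))
    have hint2 : Integrable (fun v => u * (v * g (max u v))) μ := by
      refine Integrable.mono' (integrable_const T) (measurable_const.mul hmeasv).aestronglyMeasurable ?_
      filter_upwards [ae_restrict_mem measurableSet_Ioc] with v hv
      have h1 : 0 ≤ g (max u v) := hg0 _
      have h2 : g (max u v) ≤ T := hgT _ (le_trans hu.1.le (le_max_left u v))
      rw [Real.norm_eq_abs, abs_mul, abs_mul, abs_of_pos hu.1, abs_of_pos hv.1,
        abs_of_nonneg h1]
      calc u * (v * g (max u v)) ≤ 1 * (1 * T) := by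
            refine mul_le_mul hu.2 ?_ (mul_nonneg hv.1.le h1) zero_le_one
            exact mul_le_mul hv.2 h2 h1 zero_le_one
        _ = T := by ring
    have hint1 : Integrable (fun v : ℝ => u * v) μ :=
      (continuous_const.mul continuous_id).integrableOn_Ioc
    rw [integral_add hint1 hint2]
    have e3 : (∫ v in Ioc (0:ℝ) 1, u * v) = u / 2 := by
      rw [integral_const_mul, ← intervalIntegral.integral_of_le zero_le_one,
        integral_id]
      ring
    have e4 : (∫ v in Ioc (0:ℝ) 1, u * (v * g (max u v))) = u * Φ u := by
      rw [integral_const_mul, hcore]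
    rw [e3, e4]
  -- Step 2: the outer integral over u
  have step2 : (∫ u in (0:ℝ)..1, ∫ v in (0:ℝ)..1, u * v * (1 + g (max u v)))
      = 1 / 4 + ∫ t in Ioi (0:ℝ), (c t) ^ 4 / 4 := by
    rw [intervalIntegral.integral_of_le zero_le_one]
    rw [setIntegral_congr_fun measurableSet_Ioc step1]
    have hint1 : Integrable (fun u : ℝ => u / 2) μ :=
      (continuous_id.div_const 2).integrableOn_Ioc
    have hint2 : Integrable (fun u : ℝ => u * Φ u) μ := by
      refine Integrable.mono' (integrable_const T)
        (aestronglyMeasurable_id.mul hΦint.aestronglyMeasurable) ?_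
      filter_upwards [ae_restrict_mem measurableSet_Ioc] with u hu
      rw [Real.norm_eq_abs, abs_mul, abs_of_pos hu.1]
      calc u * |Φ u| ≤ 1 * T := by
            have := hΦbound u
            have := abs_nonneg (Φ u)
            nlinarith [hu.2]
        _ = T := one_mul T
    rw [integral_add hint1 hint2]
    have e1 : (∫ u in Ioc (0:ℝ) 1, u / 2) = 1 / 4 := by
      rw [← intervalIntegral.integral_of_le zero_le_one]
      simp [intervalIntegral.integral_div, integral_id]
      norm_num
    -- the clamped kernel for Fubini
    set H : ℝ → ℝ → ℝ := fun u t => max (min u 1) 0 * G u t with hHdef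
    have hHmeas : Measurable (uncurry H) := by
      exact ((measurable_fst.min measurable_const).max measurable_const).mul hGmeas
    clear_value H
    have hHint : Integrable (uncurry H) (μ.prod ν) := by
      refine Integrable.mono' hBint hHmeas.aestronglyMeasurable (ae_of_all _ ?_)
      rintro ⟨u, t⟩
      have hcl : |max (min u 1) 0| ≤ 1 := by
        rw [abs_of_nonneg (le_max_right _ _)]
        exact max_le (min_le_right u 1) zero_le_one
      calc ‖uncurry H (u, t)‖ = |max (min u 1) 0| * ‖G u t‖ := by
            simp [uncurry, hHdef, abs_mul, Real.norm_eq_abs]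
        _ ≤ 1 * ‖G u t‖ := by
            have := norm_nonneg (G u t); nlinarith
        _ = ‖G u t‖ := one_mul _
        _ ≤ Set.indicator (Iic T) (fun _ => (1:ℝ)) t := hGbound u t
        _ ≤ Set.indicator ((univ : Set ℝ) ×ˢ Iic T) (fun _ => (1:ℝ)) (u, t) := by
            by_cases ht : t ≤ T
            · rw [Set.indicator_of_mem (mem_Iic.mpr ht), Set.indicator_of_mem (Set.mem_prod.mpr ⟨Set.mem_univ _, mem_Iic.mpr ht⟩)]
            · rw [Set.indicator_of_notMem (by simpa using ht)]
              exact Set.indicator_nonneg (fun _ _ => zero_le_one) _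
    have e2 : (∫ u in Ioc (0:ℝ) 1, u * Φ u) = ∫ t in Ioi (0:ℝ), (c t) ^ 4 / 4 := by
      have e2a : (∫ u in Ioc (0:ℝ) 1, u * Φ u)
          = ∫ u in Ioc (0:ℝ) 1, ∫ t in Ioi (0:ℝ), H u t := by
        refine setIntegral_congr_fun measurableSet_Ioc (fun u hu => ?_)
        simp only [hΦdef]
        rw [← integral_const_mul]
        refine setIntegral_congr_fun measurableSet_Ioi (fun t _ => ?_)
        simp only [hHdef]
        rw [min_eq_left hu.2, max_eq_left hu.1.le]
      rw [e2a, integral_integral_swap hHint]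
      refine setIntegral_congr_fun measurableSet_Ioi (fun t _ => ?_)
      have e2b : ∀ u ∈ Ioc (0:ℝ) 1, H u t = if u < c t then u * ((c t) ^ 2 / 2) else 0 := by
        intro u hu
        simp only [hHdef, hGdef, min_eq_left hu.2, max_eq_left hu.1.le, mul_ite, mul_zero]
      rw [setIntegral_congr_fun measurableSet_Ioc e2b]
      have hindu : (fun u : ℝ => if u < c t then u * ((c t) ^ 2 / 2) else 0)
          = Set.indicator (Iio (c t)) (fun u => u * ((c t) ^ 2 / 2)) := by
        funext u; simp [Set.indicator_apply, mem_Iio]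
      rw [hindu, integral_indicator measurableSet_Iio,
        Measure.restrict_restrict measurableSet_Iio]
      have hset : Iio (c t) ∩ Ioc (0:ℝ) 1 = Ioo 0 (c t) := by
        ext u
        simp only [mem_inter_iff, mem_Iio, mem_Ioc, mem_Ioo]
        constructor
        · rintro ⟨h1, h2, h3⟩; exact ⟨h2, h1⟩
        · rintro ⟨h1, h2⟩; exact ⟨h2, h1, le_trans h2.le (hc1 t)⟩
      rw [hset, integral_mul_const, hIooInt (c t) (hc0 t)]
      ring
    rw [e1, e2]
  -- final assembly
  have hfin : (∫ t in Ioi (0:ℝ), (c t) ^ 4 / 4) = (∫ t in Ioi (0:ℝ), (1 - K t) ^ 4) / 4 := by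
    rw [integral_div]
    congr 1
    refine setIntegral_congr_fun measurableSet_Ioi (fun t ht => ?_)
    simp only [hcdef]
    rw [hK'eq t ht]
  rw [step2, hfin]
  ring
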